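/- A payment rule φ is bribery-proof if and only if it is single-user bribery-proof. -/

import Mathlib

open Finset

/-- An instance `I = (N, C, w)`: a finite nonempty set of users `N`, a finite set of
artists `C`, and nonnegative real engagement weights `w i j` (supported on
`users × artists`), such that every user has positive total engagement. -/
structure Inst where
  users : Finset ℕ
  artists : Finset ℕ
  w : ℕ → ℕ → ℝ
  users_nonempty : users.Nonempty
  w_nonneg : ∀ i j, 0 ≤ w i j
  w_supp : ∀ i j, w i j ≠ 0 → i ∈ users ∧ j ∈ artists
  w_pos : ∀ i ∈ users, 0 < ∑ j ∈ artists, w i j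

/-- `φ` is a payment rule (with revenue share `α`) on the class of instances satisfying `P`:
payments to artists are nonnegative and total `α·|N|`. -/
def IsRuleOn (P : Inst → Prop) (α : ℝ) (φ : Inst → ℕ → ℝ) : Prop :=
  ∀ I : Inst, P I →
    (∀ j ∈ I.artists, 0 ≤ φ I j) ∧ (∑ j ∈ I.artists, φ I j) = α * I.users.card

/-- `φ` is a payment rule (with revenue share `α`). -/
abbrev IsRule (α : ℝ) (φ : Inst → ℕ → ℝ) : Prop := IsRuleOn (fun _ => True) α φ

/-- Fraud-proofness, relative to a class `P` of instances: for instances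
`I = (N \ N̂, C, w)` and `I' = (N, C, w')` agreeing on the genuine users `N \ N̂`,
and any coalition `Ĉ ⊆ C`, the gain `φ_{I'}(Ĉ) − φ_I(Ĉ)` is at most `|N̂|`. -/
def FraudProofOn (P : Inst → Prop) (φ : Inst → ℕ → ℝ) : Prop :=
  ∀ I I' : Inst, P I → P I' →
    ∀ Nhat : Finset ℕ, Nhat ⊆ I'.users → I.users = I'.users \ Nhat →
      I.artists = I'.artists →
      (∀ i ∈ I.users, ∀ j ∈ I.artists, I.w i j = I'.w i j) →
      ∀ Chat ⊆ I.artists,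
        (∑ j ∈ Chat, φ I' j) - (∑ j ∈ Chat, φ I j) ≤ (Nhat.card : ℝ)

/-- Fraud-proofness. -/
abbrev FraudProof (φ : Inst → ℕ → ℝ) : Prop := FraudProofOn (fun _ => True) φ

/-- Single-user fraud-proofness: fraud-proofness restricted to `|N̂| = 1`. -/
def SingleFraudProof (φ : Inst → ℕ → ℝ) : Prop :=
  ∀ I I' : Inst,
    ∀ Nhat : Finset ℕ, Nhat.card = 1 → Nhat ⊆ I'.users → I.users = I'.users \ Nhat →
      I.artists = I'.artists →
      (∀ i ∈ I.users, ∀ j ∈ I.artists, I.w i j = I'.w i j) →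
      ∀ Chat ⊆ I.artists,
        (∑ j ∈ Chat, φ I' j) - (∑ j ∈ Chat, φ I j) ≤ 1

open Classical in
/-- The number of users whose engagement vectors differ between two instances
(on the same user and artist sets). -/
noncomputable def bribedCount (I I' : Inst) : ℕ :=
  (I.users.filter (fun i => ∃ j ∈ I.artists, I.w i j ≠ I'.w i j)).card

/-- Bribery-proofness, relative to a class `P` of instances: for instances `I, I'` on the
same users and artists whose engagement vectors differ for exactly `k` users, and any
coalition `Ĉ ⊆ C`, the gain `φ_{I'}(Ĉ) − φ_I(Ĉ)` is at most `k`. -/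
def BriberyProofOn (P : Inst → Prop) (φ : Inst → ℕ → ℝ) : Prop :=
  ∀ I I' : Inst, P I → P I' →
    I.users = I'.users → I.artists = I'.artists →
    ∀ Chat ⊆ I.artists,
      (∑ j ∈ Chat, φ I' j) - (∑ j ∈ Chat, φ I j) ≤ (bribedCount I I' : ℝ)

/-- Bribery-proofness. -/
abbrev BriberyProof (φ : Inst → ℕ → ℝ) : Prop := BriberyProofOn (fun _ => True) φ

/-- Single-user bribery-proofness: bribery-proofness restricted to `k = 1`. -/
def SingleBriberyProof (φ : Inst → ℕ → ℝ) : Prop :=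
  ∀ I I' : Inst,
    I.users = I'.users → I.artists = I'.artists →
    bribedCount I I' = 1 →
    ∀ Chat ⊆ I.artists,
      (∑ j ∈ Chat, φ I' j) - (∑ j ∈ Chat, φ I j) ≤ 1

/-- Anonymity (relative to a class `P`): permuting the labels of the users does not
affect the payoffs of the artists. -/
def AnonymousOn (P : Inst → Prop) (φ : Inst → ℕ → ℝ) : Prop :=
  ∀ I I' : Inst, P I → P I' →
    I.users = I'.users → I.artists = I'.artists →
    ∀ σ : Equiv.Perm ℕ, (∀ i ∈ I.users, σ i ∈ I.users) →
      (∀ i ∈ I.users, ∀ j ∈ I.artists, I.w i j = I'.w (σ i) j) →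
      ∀ j ∈ I.artists, φ I j = φ I' j

/-- Neutrality (relative to a class `P`): permuting the labels of the artists permutes
their payoffs. -/
def NeutralOn (P : Inst → Prop) (φ : Inst → ℕ → ℝ) : Prop :=
  ∀ I I' : Inst, P I → P I' →
    I.users = I'.users → I.artists = I'.artists →
    ∀ σ : Equiv.Perm ℕ, (∀ j ∈ I.artists, σ j ∈ I.artists) →
      (∀ i ∈ I.users, ∀ j ∈ I.artists, I.w i j = I'.w i (σ j)) →
      ∀ j ∈ I.artists, φ I j = φ I' (σ j)

/-- Neutrality. -/
abbrev Neutral (φ : Inst → ℕ → ℝ) : Prop := NeutralOn (fun _ => True) φ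

/-- No free-ridership (relative to a class `P`): an artist with zero total engagement
receives zero payment. -/
def NoFreeRideOn (P : Inst → Prop) (φ : Inst → ℕ → ℝ) : Prop :=
  ∀ I : Inst, P I → ∀ j ∈ I.artists, (∑ i ∈ I.users, I.w i j) = 0 → φ I j = 0

/-- Sybil-proofness: artists outside `C*` cannot change their combined payoff by
splitting/merging (user-by-user engagement towards `C*` and user totals outside `C*`
are preserved). -/
def SybilProof (φ : Inst → ℕ → ℝ) : Prop :=
  ∀ I I' : Inst, I.users = I'.users → I.artists ⊆ I'.artists →
    ∀ Cstar ⊆ I.artists,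
      (∀ i ∈ I.users, ∀ j ∈ Cstar, I.w i j = I'.w i j) →
      (∀ i ∈ I.users, ∑ j ∈ I.artists \ Cstar, I.w i j = ∑ j ∈ I'.artists \ Cstar, I'.w i j) →
      ∑ j ∈ I.artists \ Cstar, φ I j = ∑ j ∈ I'.artists \ Cstar, φ I' j

/-- Strong Sybil-proofness: as Sybil-proofness, but only total engagements
(aggregated over users) are preserved. -/
def StrongSybilProof (φ : Inst → ℕ → ℝ) : Prop :=
  ∀ I I' : Inst, I.users = I'.users → I.artists ⊆ I'.artists →
    ∀ Cstar ⊆ I.artists,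
      (∀ j ∈ Cstar, ∑ i ∈ I.users, I.w i j = ∑ i ∈ I'.users, I'.w i j) →
      (∑ i ∈ I.users, ∑ j ∈ I.artists \ Cstar, I.w i j
        = ∑ i ∈ I'.users, ∑ j ∈ I'.artists \ Cstar, I'.w i j) →
      ∑ j ∈ I.artists \ Cstar, φ I j = ∑ j ∈ I'.artists \ Cstar, φ I' j

/-- Engagement monotonicity: if artist `j*`'s engagement weakly increases while every
other artist's engagement weakly decreases, then `j*`'s payoff does not decrease. -/
def EngagementMonotone (φ : Inst → ℕ → ℝ) : Prop :=
  ∀ I I' : Inst, I.users = I'.users → I.artists = I'.artists →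
    ∀ jstar ∈ I.artists,
      (∀ i ∈ I.users, I.w i jstar ≤ I'.w i jstar) →
      (∀ i ∈ I.users, ∀ j ∈ I.artists, j ≠ jstar → I'.w i j ≤ I.w i j) →
      φ I jstar ≤ φ I' jstar

/-- Pigou-Dalton consistency: transferring `δ > 0` of engagement with artist `j` from a
user `i` with more engagement to a user `i'` with less (keeping everything else fixed,
and not overshooting) does not decrease `j`'s payoff. -/
def PigouDalton (φ : Inst → ℕ → ℝ) : Prop :=
  ∀ I I' : Inst, I.users = I'.users → I.artists = I'.artists →
    ∀ i ∈ I.users, ∀ i' ∈ I.users, i ≠ i' →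
      ∀ j ∈ I.artists, ∀ δ : ℝ,
        0 < δ → 0 < I.w i j - δ →
        I'.w i j = I.w i j - δ →
        I'.w i' j = I.w i' j + δ →
        I'.w i' j ≤ I'.w i j →
        (∀ k ∈ I.users, ∀ j' ∈ I.artists, j' ≠ j → I.w k j' = I'.w k j') →
        (∀ k ∈ I.users, k ≠ i → k ≠ i' → I.w k j = I'.w k j) →
        φ I j ≤ φ I' j

/-- User-addition monotonicity: adding one new user (with an arbitrary engagement
vector) does not decrease any artist's payoff. -/
def UserAdditionMonotone (φ : Inst → ℕ → ℝ) : Prop :=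
  ∀ I I' : Inst, I.artists = I'.artists →
    ∀ i₀ : ℕ, i₀ ∉ I.users → I'.users = insert i₀ I.users →
      (∀ i ∈ I.users, ∀ j ∈ I.artists, I.w i j = I'.w i j) →
      ∀ j ∈ I.artists, φ I j ≤ φ I' j

/-- The single-user instance `I_i = ({i}, C, w_i)` extracted from an instance `I`. -/
def Inst.single (I : Inst) (i : ℕ) (hi : i ∈ I.users) : Inst where
  users := {i}
  artists := I.artists
  w := fun i' j => if i' = i then I.w i j else 0
  users_nonempty := Finset.singleton_nonempty i
  w_nonneg := by
    intro i' j
    try dsimp only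
    split
    · exact I.w_nonneg i j
    · exact le_refl 0
  w_supp := by
    intro i' j h
    try dsimp only at h
    split at h
    · rename_i hii
      exact ⟨by simp [hii], (I.w_supp i j h).2⟩
    · exact absurd rfl h
  w_pos := by
    intro i' hi'
    have h : i' = i := Finset.mem_singleton.mp hi'
    simpa [h] using I.w_pos i hi

/-- User-additivity: each artist's payoff is the sum of the payoffs they would obtain in
the single-user instances. -/
def UserAdditive (φ : Inst → ℕ → ℝ) : Prop :=
  ∀ I : Inst, ∀ j ∈ I.artists,
    φ I j = ∑ i ∈ I.users.attach, φ (I.single i.1 i.2) j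

/-- The `GlobalProp` rule: artists are paid proportionally to their share of total
engagement on the platform. -/
noncomputable def globalProp (α : ℝ) (I : Inst) (j : ℕ) : ℝ :=
  α * I.users.card * (∑ i ∈ I.users, I.w i j) /
    (∑ i ∈ I.users, ∑ j' ∈ I.artists, I.w i j')

/-- The `UserProp` rule: an `α` fraction of each user's fee is split proportionally to
that user's engagement. -/
noncomputable def userProp (α : ℝ) (I : Inst) (j : ℕ) : ℝ :=
  α * ∑ i ∈ I.users, (I.w i j / ∑ j' ∈ I.artists, I.w i j')

open Classical in
/-- The `UserEQ` rule: an `α` fraction of each user's fee is split equally among the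
artists with which the user has positive engagement. -/
noncomputable def userEQ (α : ℝ) (I : Inst) (j : ℕ) : ℝ :=
  α * ∑ i ∈ I.users,
    ((if 0 < I.w i j then (1 : ℝ) else 0) /
      ((I.artists.filter (fun j' => 0 < I.w i j')).card : ℝ))

/-- The `ScaledUserProp` rule, given a choice `γ I` of the scaling parameter for each
instance: user `i` contributes `min(γ·‖w_i‖₁, 1)`, split proportionally to `w_i`. -/
noncomputable def scaledUserProp (γ : Inst → ℝ) (I : Inst) (j : ℕ) : ℝ :=
  ∑ i ∈ I.users,
    (min (γ I * ∑ j' ∈ I.artists, I.w i j') 1 * (I.w i j / ∑ j' ∈ I.artists, I.w i j'))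

lemma Inst.ext' (I I' : Inst) (hu : I.users = I'.users) (ha : I.artists = I'.artists)
    (hw : I.w = I'.w) : I = I' := by
  cases I; cases I'
  simp only at hu ha hw
  subst hu; subst ha; subst hw
  rfl

/-- Replace user `i`'s engagement vector in `I` by the one from `I'`. -/
def replaceUser (I I' : Inst) (i : ℕ) (hi : i ∈ I.users) (hu : I.users = I'.users)
    (ha : I.artists = I'.artists) : Inst where
  users := I.users
  artists := I.artists
  w := fun i' j => if i' = i then I'.w i j else I.w i' j
  users_nonempty := I.users_nonempty
  w_nonneg := by
    intro i' j; try dsimp only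
    split
    · exact I'.w_nonneg i j
    · exact I.w_nonneg i' j
  w_supp := by
    intro i' j h; try dsimp only at h
    split at h
    · rename_i hii; subst hii
      refine ⟨hi, ?_⟩
      rw [ha]; exact (I'.w_supp i' j h).2
    · exact I.w_supp i' j h
  w_pos := by
    intro i' hi'; try dsimp only
    by_cases hii : i' = i
    · subst hii
      simp only [if_pos rfl]
      rw [ha]
      exact I'.w_pos i' (hu ▸ hi')
    · simp only [if_neg hii]
      exact I.w_pos i' hi'

theorem stmt1 (α : ℝ) (hα : α ∈ Set.Ioc (0 : ℝ) 1)
    (φ : Inst → ℕ → ℝ) (hφ : IsRule α φ) :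
    BriberyProof φ ↔ SingleBriberyProof φ := by
  classical
  constructor
  · intro h I I' hu ha hk Chat hC
    have := h I I' trivial trivial hu ha Chat hC
    rw [hk] at this
    simpa using this
  · intro h
    suffices H : ∀ k : ℕ, ∀ I I' : Inst, I.users = I'.users → I.artists = I'.artists →
        bribedCount I I' = k → ∀ Chat ⊆ I.artists,
        (∑ j ∈ Chat, φ I' j) - (∑ j ∈ Chat, φ I j) ≤ (k : ℝ) by
      intro I I' _ _ hu ha Chat hC
      exact H _ I I' hu ha rfl Chat hC
    intro k
    induction k with
    | zero =>
      intro I I' hu ha hk Chat hC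
      have hagree : ∀ i ∈ I.users, ∀ j ∈ I.artists, I.w i j = I'.w i j := by
        intro i hiu j hja
        by_contra hne
        have : i ∈ I.users.filter (fun i => ∃ j ∈ I.artists, I.w i j ≠ I'.w i j) :=
          Finset.mem_filter.mpr ⟨hiu, j, hja, hne⟩
        have := Finset.card_pos.mpr ⟨i, this⟩
        rw [show (I.users.filter (fun i => ∃ j ∈ I.artists, I.w i j ≠ I'.w i j)).card
            = bribedCount I I' from rfl, hk] at this
        exact absurd this (lt_irrefl 0)
      have : I = I' := by
        refine Inst.ext' I I' hu ha ?_
        funext i j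
        by_cases hiu : i ∈ I.users
        · by_cases hja : j ∈ I.artists
          · exact hagree i hiu j hja
          · have h1 : I.w i j = 0 := by
              by_contra hne; exact hja (I.w_supp i j hne).2
            have h2 : I'.w i j = 0 := by
              by_contra hne; exact hja (ha ▸ (I'.w_supp i j hne).2)
            rw [h1, h2]
        · have h1 : I.w i j = 0 := by
            by_contra hne; exact hiu (I.w_supp i j hne).1
          have h2 : I'.w i j = 0 := by
            by_contra hne; exact hiu (hu ▸ (I'.w_supp i j hne).1)
          rw [h1, h2]
      subst this
      simp
    | succ k ih =>
      intro I I' hu ha hk Chat hC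
      set F := I.users.filter (fun i => ∃ j ∈ I.artists, I.w i j ≠ I'.w i j) with hF
      have hFcard : F.card = k + 1 := hk
      obtain ⟨i, hiF⟩ := Finset.card_pos.mp (by rw [hFcard]; omega)
      obtain ⟨hiu, j0, hj0, hne0⟩ := Finset.mem_filter.mp hiF
      set J := replaceUser I I' i hiu hu ha with hJ
      have hJw : ∀ i' j, J.w i' j = if i' = i then I'.w i j else I.w i' j := fun _ _ => rfl
      have hJu : J.users = I.users := rfl
      have hJa : J.artists = I.artists := rfl
      -- bribedCount I J = 1
      have hc1 : bribedCount I J = 1 := by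
        have : I.users.filter (fun i' => ∃ j ∈ I.artists, I.w i' j ≠ J.w i' j) = {i} := by
          ext i'
          simp only [Finset.mem_filter, Finset.mem_singleton]
          constructor
          · rintro ⟨hi'u, j, hja, hne⟩
            by_contra hii
            rw [hJw, if_neg hii] at hne
            exact hne rfl
          · rintro rfl
            exact ⟨hiu, j0, hj0, by rw [hJw, if_pos rfl]; exact hne0⟩
        unfold bribedCount
        rw [this]
        exact Finset.card_singleton i
      -- bribedCount J I' = k
      have hck : bribedCount J I' = k := by
        have : J.users.filter (fun i' => ∃ j ∈ J.artists, J.w i' j ≠ I'.w i' j)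
            = F.erase i := by
          ext i'
          simp only [Finset.mem_erase, hF, Finset.mem_filter]
          constructor
          · rintro ⟨hi'u, j, hja, hne⟩
            have hii : i' ≠ i := by
              rintro rfl
              rw [hJw, if_pos rfl] at hne
              exact hne rfl
            rw [hJw, if_neg hii] at hne
            exact ⟨hii, hi'u, j, hja, hne⟩
          · rintro ⟨hii, hi'u, j, hja, hne⟩
            exact ⟨hi'u, j, hja, by rw [hJw, if_neg hii]; exact hne⟩
        unfold bribedCount
        rw [this, Finset.card_erase_of_mem hiF, hFcard]
        omega
      have step1 : (∑ j ∈ Chat, φ J j) - (∑ j ∈ Chat, φ I j) ≤ 1 :=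
        h I J rfl rfl hc1 Chat hC
      have step2 : (∑ j ∈ Chat, φ I' j) - (∑ j ∈ Chat, φ J j) ≤ (k : ℝ) :=
        ih J I' (hJu.trans hu) (hJa.trans ha) hck Chat hC
      push_cast
      linarith
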